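/- A braid β ∈ B_n lies in ker(φ_r) if and only if β · 0⃗ = 0⃗ under the affine action β·x = M(β)x + v(β) on (ℤ/rℤ)^{n+1}; and if β is moreover a pure braid in ker(φ_r), then β·x = x for every x ∈ (ℤ/rℤ)^{n+1}. -/

import Mathlib

/-- The braid relations on `m` generators `σ_1, ..., σ_m` (indexed here by `Fin m`):
`σ i σ j = σ j σ i` for `|i - j| ≥ 2` and `σ i σ (i+1) σ i = σ (i+1) σ i σ (i+1)`. -/
def braidRels (m : ℕ) : Set (FreeGroup (Fin m)) :=
  { w | (∃ i j : Fin m, (i : ℕ) + 2 ≤ (j : ℕ) ∧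
          w = FreeGroup.of i * FreeGroup.of j * (FreeGroup.of i)⁻¹ * (FreeGroup.of j)⁻¹) ∨
        (∃ i j : Fin m, (i : ℕ) + 1 = (j : ℕ) ∧
          w = FreeGroup.of i * FreeGroup.of j * FreeGroup.of i *
              (FreeGroup.of j * FreeGroup.of i * FreeGroup.of j)⁻¹) }

/-- The braid group on `m + 1` strands, presented with `m` Artin generators.
`BraidGroup (n-1)` is the braid group `B_n`. -/
abbrev BraidGroup (m : ℕ) : Type := PresentedGroup (braidRels m)

/-- The `k`-th Artin generator (`0`-indexed: `braidGen k` is the Artin generator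
`σ_{k+1}` of the paper, braiding strands `k` and `k+1` in `0`-indexed numbering);
junk value `1` if `k` is out of range. -/
def braidGen {m : ℕ} (k : ℕ) : BraidGroup m :=
  if h : k < m then PresentedGroup.of (⟨k, h⟩ : Fin m) else 1

/-- The matrix `P_i` of the virtual undercrossing map: the identity `(n+1)×(n+1)` matrix
over `ℤ/rℤ` (coordinates indexed `0, ..., n`) with column `k+1` (the paper's `i = k+1`,
for the `0`-indexed generator `k`) replaced by `e_k - e_{k+1} + e_{k+2}`; identity if `k`
is out of range. -/
def Pmat (n r : ℕ) (k : ℕ) : Matrix (Fin (n + 1)) (Fin (n + 1)) (ZMod r) :=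
  Matrix.of fun s t =>
    if h : k + 1 < n then
      if t = (⟨k + 1, by omega⟩ : Fin (n + 1)) then
        (if s = (⟨k, by omega⟩ : Fin (n + 1)) then 1
         else if s = (⟨k + 1, by omega⟩ : Fin (n + 1)) then -1
         else if s = (⟨k + 2, by omega⟩ : Fin (n + 1)) then 1 else 0)
      else if s = t then 1 else 0
    else if s = t then 1 else 0

/-- The translation part `e_{i+1} - e_i` of the virtual undercrossing map on the
`0`-indexed generator `k` (the paper's `σ_i` with `i = k+1`): `e_{k+2} - e_{k+1}`
in `(ℤ/rℤ)^{n+1}`; zero if `k` is out of range. -/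
def vvec (n r : ℕ) (k : ℕ) : Fin (n + 1) → ZMod r :=
  if h : k + 1 < n then
    Pi.single (⟨k + 2, by omega⟩ : Fin (n + 1)) 1 -
      Pi.single (⟨k + 1, by omega⟩ : Fin (n + 1)) 1
  else 0

set_option maxRecDepth 8000
set_option maxHeartbeats 1600000

namespace Stmt15

/-! ### The semidirect-product-style target group for `(π, φ)` -/

@[ext] structure PG (n r : ℕ) where
  p : Equiv.Perm (Fin n)
  f : Fin n → ZMod r

namespace PG

variable {n r : ℕ}

instance : One (PG n r) := ⟨⟨1, 0⟩⟩
instance : Mul (PG n r) := ⟨fun a b => ⟨a.p * b.p, a.f + fun t => b.f (a.p⁻¹ t)⟩⟩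
instance : Inv (PG n r) := ⟨fun a => ⟨a.p⁻¹, - fun t => a.f (a.p t)⟩⟩

@[simp] lemma mul_p (a b : PG n r) : (a * b).p = a.p * b.p := rfl
@[simp] lemma mul_f (a b : PG n r) : (a * b).f = a.f + fun t => b.f (a.p⁻¹ t) := rfl
@[simp] lemma one_p : (1 : PG n r).p = 1 := rfl
@[simp] lemma one_f : (1 : PG n r).f = 0 := rfl
@[simp] lemma inv_p (a : PG n r) : (a⁻¹).p = a.p⁻¹ := rfl
@[simp] lemma inv_f (a : PG n r) : (a⁻¹).f = - fun t => a.f (a.p t) := rfl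

instance : Group (PG n r) :=
  Group.ofLeftAxioms
    (fun a b c => by
      ext t
      · simp [mul_assoc]
      · simp [mul_assoc, Equiv.Perm.mul_apply, add_assoc])
    (fun a => by ext t <;> simp)
    (fun a => by
      ext t
      · simp
      · simp)

/-- first projection, a group homomorphism -/
def phom (n r : ℕ) : PG n r →* Equiv.Perm (Fin n) where
  toFun := PG.p
  map_one' := rfl
  map_mul' := fun _ _ => rfl

end PG

/-! ### Verification of the braid relations in `PG n r` -/

variable {n r : ℕ}

lemma swap_comm_test (a b c d : Fin n) (hab : (a:ℕ)+1 = b) (hcd : (c:ℕ)+1 = d)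
    (h : (b:ℕ)+1 ≤ c) :
    Equiv.swap a b * Equiv.swap c d = Equiv.swap c d * Equiv.swap a b := by
  ext t
  simp only [Equiv.Perm.mul_apply, Equiv.swap_apply_def]
  split_ifs <;> (simp only [Fin.coe_castSucc, Fin.ext_iff, not_true] at *; try omega)

lemma fun_comm_test (a b c d : Fin n) (hab : (a:ℕ)+1 = b) (hcd : (c:ℕ)+1 = d)
    (h : (b:ℕ)+1 ≤ c) :
    ((Pi.single b 1 : Fin n → ZMod r) + fun t => (Pi.single d 1 : Fin n → ZMod r) ((Equiv.swap a b)⁻¹ t))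
      = (Pi.single d 1 : Fin n → ZMod r) + fun t => (Pi.single b 1 : Fin n → ZMod r) ((Equiv.swap c d)⁻¹ t) := by
  funext t
  simp only [Pi.add_apply, Pi.single_apply, Equiv.swap_inv, Equiv.swap_apply_def]
  split_ifs <;>
    first
      | ring1
      | (exfalso; simp only [Fin.coe_castSucc, Fin.ext_iff, not_true] at *; try omega)

lemma swap_braid_test (a b b' c : Fin n) (hab : (a:ℕ)+1 = b) (hb : (b':ℕ) = (b:ℕ))
    (hbc : (b':ℕ)+1 = c) :
    Equiv.swap a b * Equiv.swap b' c * Equiv.swap a b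
      = Equiv.swap b' c * Equiv.swap a b * Equiv.swap b' c := by
  ext t
  simp only [Equiv.Perm.mul_apply, Equiv.swap_apply_def]
  split_ifs <;> (simp only [Fin.coe_castSucc, Fin.ext_iff, not_true] at *; try omega)

lemma fun_braid_test (a b b' c : Fin n) (hab : (a:ℕ)+1 = b) (hb : (b':ℕ) = (b:ℕ))
    (hbc : (b':ℕ)+1 = c) :
    (((Pi.single b 1 : Fin n → ZMod r) + fun t => (Pi.single c 1 : Fin n → ZMod r) ((Equiv.swap a b)⁻¹ t))
       + fun t => (Pi.single b 1 : Fin n → ZMod r) (((Equiv.swap a b) * (Equiv.swap b' c))⁻¹ t))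
    = (((Pi.single c 1 : Fin n → ZMod r) + fun t => (Pi.single b 1 : Fin n → ZMod r) ((Equiv.swap b' c)⁻¹ t))
       + fun t => (Pi.single c 1 : Fin n → ZMod r) (((Equiv.swap b' c) * (Equiv.swap a b))⁻¹ t)) := by
  funext t
  simp only [Pi.add_apply, Pi.single_apply, mul_inv_rev, Equiv.swap_inv,
    Equiv.Perm.mul_apply, Equiv.swap_apply_def]
  split_ifs <;>
    first
      | ring1
      | (exfalso; simp only [Fin.coe_castSucc, Fin.ext_iff, not_true] at *; try omega)

/-- images of the Artin generators in `PG n r` -/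
def gmap (n r : ℕ) (hn : 1 ≤ n) : Fin (n - 1) → PG n r := fun i =>
  ⟨Equiv.swap ⟨i.1, by have := i.isLt; omega⟩ ⟨i.1 + 1, by have := i.isLt; omega⟩,
    Pi.single ⟨i.1 + 1, by have := i.isLt; omega⟩ 1⟩

lemma rels_hold (n r : ℕ) (hn : 1 ≤ n) :
    ∀ w ∈ braidRels (n - 1), FreeGroup.lift (gmap n r hn) w = 1 := by
  rintro w (⟨i, j, hij, rfl⟩ | ⟨i, j, hij, rfl⟩) <;>
    simp only [map_mul, map_inv, FreeGroup.lift_apply_of]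
  · have hcomm : gmap n r hn i * gmap n r hn j = gmap n r hn j * gmap n r hn i := by
      refine PG.ext ?_ ?_
      · exact swap_comm_test _ _ _ _ rfl rfl (by simp; omega)
      · exact fun_comm_test _ _ _ _ rfl rfl (by simp; omega)
    rw [hcomm]
    group
  · have hb : gmap n r hn i * gmap n r hn j * gmap n r hn i
        = gmap n r hn j * gmap n r hn i * gmap n r hn j := by
      refine PG.ext ?_ ?_
      · exact swap_braid_test _ _ _ _ rfl (by simpa using hij.symm) rfl
      · exact fun_braid_test _ _ _ _ rfl (by simpa using hij.symm) rfl
    rw [hb]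
    group

/-! ### The matrix side -/

/-- extension of a permutation of `Fin n` to `Fin (n+1)` fixing the last index -/
def extFun (n : ℕ) (p : Equiv.Perm (Fin n)) : Fin (n + 1) → Fin (n + 1) :=
  fun s => if h : (s : ℕ) < n then Fin.castSucc (p ⟨s, h⟩) else s

lemma extFun_mul (n : ℕ) (p q : Equiv.Perm (Fin n)) :
    extFun n (p * q) = extFun n p ∘ extFun n q := by
  funext s
  by_cases h : (s : ℕ) < n <;>
    simp [extFun, h, Equiv.Perm.mul_apply, Fin.ext_iff]

lemma extFun_one (n : ℕ) : extFun n (1 : Equiv.Perm (Fin n)) = id := by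
  funext s
  simp only [extFun, id]
  split_ifs with h
  · simp [Fin.ext_iff]
  · rfl

/-- permutation matrix (row `s` has a `1` in column `extFun p⁻¹ s`) -/
def Qmat (n r : ℕ) (p : Equiv.Perm (Fin n)) : Matrix (Fin (n + 1)) (Fin (n + 1)) (ZMod r) :=
  Matrix.of fun s t => if t = extFun n p⁻¹ s then 1 else 0

/-- lower triangular all-ones (partial sum) matrix -/
def Smat (n r : ℕ) : Matrix (Fin (n + 1)) (Fin (n + 1)) (ZMod r) :=
  Matrix.of fun s t => if (t : ℕ) ≤ (s : ℕ) then 1 else 0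

/-- difference matrix, inverse of `Smat` -/
def Dmat (n r : ℕ) : Matrix (Fin (n + 1)) (Fin (n + 1)) (ZMod r) :=
  Matrix.of fun s t => (if t = s then 1 else 0) - (if (t : ℕ) + 1 = (s : ℕ) then 1 else 0)

lemma sumQ (n r : ℕ) (p : Equiv.Perm (Fin n)) (s : Fin (n + 1)) (f : Fin (n + 1) → ZMod r) :
    ∑ u, Qmat n r p s u * f u = f (extFun n p⁻¹ s) := by
  simp [Qmat, ite_mul, Finset.sum_ite_eq']

lemma Qmat_mulVec (n r : ℕ) (p : Equiv.Perm (Fin n)) (x : Fin (n + 1) → ZMod r) :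
    (Qmat n r p).mulVec x = fun s => x (extFun n p⁻¹ s) := by
  funext s; simp [Matrix.mulVec, dotProduct, sumQ]

lemma Qmat_mul (n r : ℕ) (p q : Equiv.Perm (Fin n)) :
    Qmat n r (p * q) = Qmat n r p * Qmat n r q := by
  ext s t
  rw [Matrix.mul_apply]
  have : ∀ u, Qmat n r p s u * Qmat n r q u t = Qmat n r p s u * (fun u => Qmat n r q u t) u :=
    fun u => rfl
  rw [Finset.sum_congr rfl fun u _ => this u, sumQ]
  simp only [Qmat, Matrix.of_apply, mul_inv_rev, extFun_mul, Function.comp_apply]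

lemma Qmat_one (n r : ℕ) : Qmat n r 1 = 1 := by
  ext s t
  simp [Qmat, extFun_one, Matrix.one_apply, eq_comm]

lemma sumD (n r : ℕ) (s : Fin (n + 1)) (f : Fin (n + 1) → ZMod r) :
    ∑ u, Dmat n r s u * f u
      = f s - (if h : 1 ≤ (s : ℕ) then f ⟨(s : ℕ) - 1, by omega⟩ else 0) := by
  simp only [Dmat, Matrix.of_apply, sub_mul, ite_mul, one_mul, zero_mul,
    Finset.sum_sub_distrib, Finset.sum_ite_eq', Finset.mem_univ, if_true]
  congr 1
  split_ifs with h
  · have hc : ∀ u : Fin (n + 1), ((u : ℕ) + 1 = (s : ℕ)) ↔ (u = ⟨(s : ℕ) - 1, by omega⟩) := by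
      intro u; simp only [Fin.ext_iff]; omega
    simp only [hc, Finset.sum_ite_eq', Finset.mem_univ, if_true]
  · apply Finset.sum_eq_zero
    intro u _
    rw [if_neg]; omega

lemma Dmat_mulVec (n r : ℕ) (x : Fin (n + 1) → ZMod r) :
    (Dmat n r).mulVec x
      = fun s => x s - (if h : 1 ≤ (s : ℕ) then x ⟨(s : ℕ) - 1, by omega⟩ else 0) := by
  funext s; simp [Matrix.mulVec, dotProduct, sumD]

lemma sumD' (n r : ℕ) (t : Fin (n + 1)) (f : Fin (n + 1) → ZMod r) :
    ∑ u, f u * Dmat n r u t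
      = f t - (if h : (t : ℕ) < n then f ⟨(t : ℕ) + 1, by omega⟩ else 0) := by
  simp only [Dmat, Matrix.of_apply, mul_sub, mul_ite, mul_one, mul_zero,
    Finset.sum_sub_distrib]
  congr 1
  · have hc : ∀ u : Fin (n + 1), (t = u) ↔ (u = t) := fun u => eq_comm
    simp only [hc, Finset.sum_ite_eq', Finset.mem_univ, if_true]
  · split_ifs with h
    · have hc : ∀ u : Fin (n + 1), ((t : ℕ) + 1 = (u : ℕ)) ↔ (u = ⟨(t : ℕ) + 1, by omega⟩) := by
        intro u; simp only [Fin.ext_iff]; omega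
      simp only [hc, Finset.sum_ite_eq', Finset.mem_univ, if_true]
    · apply Finset.sum_eq_zero
      intro u _
      rw [if_neg]
      have := u.isLt
      omega

lemma DS_one (n r : ℕ) : Dmat n r * Smat n r = 1 := by
  ext s t
  rw [Matrix.mul_apply]
  have : ∀ u, Dmat n r s u * Smat n r u t = Dmat n r s u * (fun u => Smat n r u t) u :=
    fun u => rfl
  rw [Finset.sum_congr rfl fun u _ => this u, sumD]
  simp only [Smat, Matrix.of_apply, Matrix.one_apply]
  split_ifs <;> (simp only [Fin.coe_castSucc, Fin.ext_iff, not_true] at *) <;> first | ring1 | omega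

lemma SD_one (n r : ℕ) : Smat n r * Dmat n r = 1 := by
  ext s t
  rw [Matrix.mul_apply]
  have : ∀ u, Smat n r s u * Dmat n r u t = (fun u => Smat n r s u) u * Dmat n r u t :=
    fun u => rfl
  rw [Finset.sum_congr rfl fun u _ => this u, sumD']
  simp only [Smat, Matrix.of_apply, Matrix.one_apply]
  have ht := t.isLt
  split_ifs <;> (simp only [Fin.coe_castSucc, Fin.ext_iff, not_true] at *) <;> first | ring1 | omega

/-! ### `Qmat` of a swap, sandwiched -/

lemma Pmat_col (n r k : ℕ) (hk : k + 1 < n) (u : Fin (n + 1)) :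
    Pmat n r k u ⟨k + 1, by omega⟩
      = (if u = (⟨k, by omega⟩ : Fin (n + 1)) then 1 else 0)
        - (if u = (⟨k + 1, by omega⟩ : Fin (n + 1)) then 1 else 0)
        + (if u = (⟨k + 2, by omega⟩ : Fin (n + 1)) then 1 else 0) := by
  simp only [Pmat, Matrix.of_apply, dif_pos hk, if_pos rfl]
  split_ifs <;>
    first
      | ring1
      | (exfalso; simp only [Fin.coe_castSucc, Fin.ext_iff, not_true] at *; try omega)

lemma Pmat_col' (n r k : ℕ) (hk : k + 1 < n) (u t : Fin (n + 1))
    (ht : t ≠ ⟨k + 1, by omega⟩) :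
    Pmat n r k u t = if u = t then 1 else 0 := by
  simp only [Pmat, Matrix.of_apply, dif_pos hk, if_neg ht]

lemma QS_swap (n r k : ℕ) (hk : k + 1 < n) :
    Qmat n r (Equiv.swap (⟨k, Nat.lt_of_succ_lt hk⟩ : Fin n) ⟨k + 1, by omega⟩) * Smat n r
      = Smat n r * Pmat n r k := by
  ext s t
  rw [Matrix.mul_apply, Matrix.mul_apply]
  have h1 : ∀ u, Qmat n r (Equiv.swap (⟨k, Nat.lt_of_succ_lt hk⟩ : Fin n) ⟨k + 1, by omega⟩) s u
      * Smat n r u t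
      = Qmat n r (Equiv.swap (⟨k, Nat.lt_of_succ_lt hk⟩ : Fin n) ⟨k + 1, by omega⟩) s u
      * (fun u => Smat n r u t) u := fun u => rfl
  rw [Finset.sum_congr rfl fun u _ => h1 u, sumQ, Equiv.swap_inv]
  by_cases ht : t = (⟨k + 1, by omega⟩ : Fin (n + 1))
  · subst ht
    simp only [Pmat_col n r k hk, mul_add, mul_sub, mul_ite, mul_one, mul_zero,
      Finset.sum_add_distrib, Finset.sum_sub_distrib, Finset.sum_ite_eq',
      Finset.mem_univ, if_true]
    simp only [Smat, Matrix.of_apply, extFun, Equiv.swap_apply_def, Fin.coe_castSucc]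
    have hs := s.isLt
    split_ifs <;>
      first
        | ring1
        | (exfalso; simp only [Fin.coe_castSucc, Fin.ext_iff, not_true] at *; try omega)
  · simp only [fun u => Pmat_col' n r k hk u t ht, mul_ite, mul_one, mul_zero,
      Finset.sum_ite_eq', Finset.mem_univ, if_true]
    simp only [Smat, Matrix.of_apply, extFun, Equiv.swap_apply_def, Fin.coe_castSucc]
    have hs := s.isLt
    have ht' : (t : ℕ) ≠ k + 1 := by
      intro hh; exact ht (by simp [Fin.ext_iff, hh])
    split_ifs <;>
      first
        | ring1
        | (exfalso; simp only [Fin.coe_castSucc, Fin.ext_iff, not_true] at *; try omega)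

lemma Mgen (n r k : ℕ) (hk : k + 1 < n) :
    Dmat n r * Qmat n r (Equiv.swap (⟨k, Nat.lt_of_succ_lt hk⟩ : Fin n) ⟨k + 1, by omega⟩) * Smat n r
      = Pmat n r k := by
  rw [Matrix.mul_assoc, QS_swap n r k hk, ← Matrix.mul_assoc, DS_one, Matrix.one_mul]

/-! ### the translation part -/

/-- extend a vector on `Fin n` by `0` to `Fin (n+1)` -/
def Fv (n r : ℕ) (f : Fin n → ZMod r) : Fin (n + 1) → ZMod r :=
  fun s => if h : (s : ℕ) < n then f ⟨s, h⟩ else 0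

lemma Fv_add (n r : ℕ) (f g : Fin n → ZMod r) : Fv n r (f + g) = Fv n r f + Fv n r g := by
  funext s
  simp only [Fv, Pi.add_apply]
  split_ifs <;> simp

lemma Fv_zero (n r : ℕ) : Fv n r 0 = 0 := by
  funext s
  simp only [Fv, Pi.zero_apply]
  split_ifs <;> rfl

lemma Fv_eq_zero (n r : ℕ) (f : Fin n → ZMod r) (h : Fv n r f = 0) : f = 0 := by
  funext t
  have := congrFun h (Fin.castSucc t)
  simpa [Fv, t.isLt] using this

lemma Fv_comp (n r : ℕ) (p : Equiv.Perm (Fin n)) (f : Fin n → ZMod r) :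
    Fv n r (fun t => f (p⁻¹ t)) = fun s => Fv n r f (extFun n p⁻¹ s) := by
  funext s
  by_cases h : (s : ℕ) < n <;>
    simp [Fv, extFun, h]

lemma vgen (n r k : ℕ) (hk : k + 1 < n) :
    -(Dmat n r).mulVec (Fv n r (Pi.single (⟨k + 1, hk⟩ : Fin n) 1)) = vvec n r k := by
  funext s
  rw [Dmat_mulVec]
  simp only [vvec, dif_pos hk, Fv, Pi.single_apply, Pi.neg_apply, Pi.sub_apply]
  have hs := s.isLt
  split_ifs <;>
    first
      | ring1
      | (exfalso; simp only [Fin.coe_castSucc, Fin.ext_iff, not_true] at *; try omega)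

end Stmt15


/-- a braid `β ∈ B_n` lies in `ker φ_r` iff `β · 0 = 0` under the affine
action `β · x = M(β) x + v(β)` on `(ℤ/rℤ)^{n+1}` coming from the virtual undercrossing
homomorphism `Υ_r(β) = (M(β), v(β))`; and if `β` is moreover a pure braid
(`π β = 1`) in `ker φ_r`, then `β · x = x` for every `x`. -/
theorem stmt_15 (n r : ℕ) (hn : 2 ≤ n) :
    ∃ (π : BraidGroup (n - 1) →* Equiv.Perm (Fin n))
      (φ : BraidGroup (n - 1) → (Fin n → ZMod r))
      (M : BraidGroup (n - 1) → Matrix (Fin (n + 1)) (Fin (n + 1)) (ZMod r))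
      (v : BraidGroup (n - 1) → (Fin (n + 1) → ZMod r)),
      (∀ k : ℕ, ∀ hk : k + 1 < n,
        π (braidGen k) = Equiv.swap ⟨k, by omega⟩ ⟨k + 1, hk⟩) ∧
      (∀ k : ℕ, ∀ hk : k + 1 < n,
        φ (braidGen k) = Pi.single (⟨k + 1, hk⟩ : Fin n) 1) ∧
      (∀ α β : BraidGroup (n - 1),
        φ (α * β) = φ α + fun t => φ β ((π α)⁻¹ t)) ∧
      (∀ k : ℕ, k + 1 < n → M (braidGen k) = Pmat n r k) ∧
      (∀ k : ℕ, k + 1 < n → v (braidGen k) = vvec n r k) ∧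
      (∀ α β : BraidGroup (n - 1), M (α * β) = M α * M β) ∧
      (∀ α β : BraidGroup (n - 1), v (α * β) = (M α).mulVec (v β) + v α) ∧
      (∀ β : BraidGroup (n - 1),
        φ β = 0 ↔ (M β).mulVec (0 : Fin (n + 1) → ZMod r) + v β = 0) ∧
      (∀ β : BraidGroup (n - 1), π β = 1 → φ β = 0 →
        ∀ x : Fin (n + 1) → ZMod r, (M β).mulVec x + v β = x) := by
  classical
  have hn1 : 1 ≤ n := by omega
  obtain ⟨θ, hθof⟩ : ∃ θ : BraidGroup (n - 1) →* Stmt15.PG n r,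
      ∀ i : Fin (n - 1), θ (PresentedGroup.of i) = Stmt15.gmap n r hn1 i :=
    ⟨PresentedGroup.toGroup (Stmt15.rels_hold n r hn1),
      fun i => PresentedGroup.toGroup.of _⟩
  have hθg : ∀ k : ℕ, ∀ _ : k + 1 < n,
      θ (braidGen k) = Stmt15.gmap n r hn1 ⟨k, by omega⟩ := by
    intro k hk
    rw [braidGen, dif_pos (show k < n - 1 by omega)]
    exact hθof _
  refine ⟨(Stmt15.PG.phom n r).comp θ,
    fun β => (θ β).f,
    fun β => Stmt15.Dmat n r * Stmt15.Qmat n r ((θ β).p) * Stmt15.Smat n r,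
    fun β => -(Stmt15.Dmat n r).mulVec (Stmt15.Fv n r ((θ β).f)),
    ?_, ?_, ?_, ?_, ?_, ?_, ?_, ?_, ?_⟩
  · intro k hk
    show (θ (braidGen k)).p = _
    rw [hθg k hk]
    rfl
  · intro k hk
    show (θ (braidGen k)).f = _
    rw [hθg k hk]
    rfl
  · intro α β
    show (θ (α * β)).f = _
    rw [map_mul]
    rfl
  · intro k hk
    show Stmt15.Dmat n r * Stmt15.Qmat n r ((θ (braidGen k)).p) * Stmt15.Smat n r = _
    rw [hθg k hk]
    exact Stmt15.Mgen n r k hk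
  · intro k hk
    show -(Stmt15.Dmat n r).mulVec (Stmt15.Fv n r ((θ (braidGen k)).f)) = _
    rw [hθg k hk]
    exact Stmt15.vgen n r k hk
  · intro α β
    show Stmt15.Dmat n r * Stmt15.Qmat n r ((θ (α * β)).p) * Stmt15.Smat n r
      = (Stmt15.Dmat n r * Stmt15.Qmat n r ((θ α).p) * Stmt15.Smat n r)
        * (Stmt15.Dmat n r * Stmt15.Qmat n r ((θ β).p) * Stmt15.Smat n r)
    rw [map_mul, Stmt15.PG.mul_p, Stmt15.Qmat_mul]
    have e1 : ∀ A B : Matrix (Fin (n + 1)) (Fin (n + 1)) (ZMod r),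
        Stmt15.Dmat n r * A * Stmt15.Smat n r * (Stmt15.Dmat n r * B * Stmt15.Smat n r)
          = Stmt15.Dmat n r * (A * (Stmt15.Smat n r * Stmt15.Dmat n r) * B) * Stmt15.Smat n r := by
      intro A B; noncomm_ring
    rw [e1, Stmt15.SD_one, mul_one]
  · intro α β
    show -(Stmt15.Dmat n r).mulVec (Stmt15.Fv n r ((θ (α * β)).f))
      = (Stmt15.Dmat n r * Stmt15.Qmat n r ((θ α).p) * Stmt15.Smat n r).mulVec
          (-(Stmt15.Dmat n r).mulVec (Stmt15.Fv n r ((θ β).f)))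
        + -(Stmt15.Dmat n r).mulVec (Stmt15.Fv n r ((θ α).f))
    have key : Stmt15.Fv n r ((θ (α * β)).f)
        = Stmt15.Fv n r ((θ α).f)
          + (Stmt15.Qmat n r ((θ α).p)).mulVec (Stmt15.Fv n r ((θ β).f)) := by
      rw [map_mul, Stmt15.PG.mul_f, Stmt15.Fv_add, Stmt15.Qmat_mulVec, Stmt15.Fv_comp]
    rw [key, Matrix.mulVec_add, Matrix.mulVec_neg, Matrix.mulVec_mulVec]
    have e2 : Stmt15.Dmat n r * Stmt15.Qmat n r ((θ α).p) * Stmt15.Smat n r * Stmt15.Dmat n r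
        = Stmt15.Dmat n r * Stmt15.Qmat n r ((θ α).p) := by
      rw [Matrix.mul_assoc (Stmt15.Dmat n r * Stmt15.Qmat n r ((θ α).p)), Stmt15.SD_one,
        Matrix.mul_one]
    rw [Matrix.mulVec_mulVec, e2]
    abel
  · intro β
    show (θ β).f = 0 ↔ _
    rw [Matrix.mulVec_zero, zero_add]
    constructor
    · intro h
      show -(Stmt15.Dmat n r).mulVec (Stmt15.Fv n r ((θ β).f)) = 0
      rw [h, Stmt15.Fv_zero, Matrix.mulVec_zero, neg_zero]
    · intro h
      have h' : -(Stmt15.Dmat n r).mulVec (Stmt15.Fv n r ((θ β).f)) = 0 := h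
      have h1 : (Stmt15.Dmat n r).mulVec (Stmt15.Fv n r ((θ β).f)) = 0 := neg_eq_zero.mp h'
      have h2 : Stmt15.Fv n r ((θ β).f) = 0 := by
        have h3 := congrArg (Stmt15.Smat n r).mulVec h1
        rwa [Matrix.mulVec_mulVec, Stmt15.SD_one, Matrix.one_mulVec, Matrix.mulVec_zero] at h3
      exact Stmt15.Fv_eq_zero n r _ h2
  · intro β h1 h0 x
    show (Stmt15.Dmat n r * Stmt15.Qmat n r ((θ β).p) * Stmt15.Smat n r).mulVec x
        + -(Stmt15.Dmat n r).mulVec (Stmt15.Fv n r ((θ β).f)) = x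
    have hp : (θ β).p = 1 := h1
    have hf : (θ β).f = 0 := h0
    rw [hp, hf, Stmt15.Qmat_one, Matrix.mul_one, Stmt15.DS_one, Matrix.one_mulVec,
      Stmt15.Fv_zero, Matrix.mulVec_zero, neg_zero, add_zero]
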